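/- arXiv:2408.06862 — 3 statements merged into one kernel-verified Lean document; each statement's English description precedes it below -/
import Mathlib

section
/- Let c ∈ ℝ, let Y be a random variable on (0,∞) with density g satisfying ess sup_{y>0} y^{2c-1} g(y) =: G < ∞, and let h : (0,∞) → ℝ be measurable with E[h(Y)²] < ∞. Then ∫_ℝ |E[Y^{c-1+2πit} h(Y)]|² dt ≤ G · E[h(Y)²]. -/
open MeasureTheory Set

open Complex Real Filter
open scoped FourierTransform


lemma kernel_norm (ε : ℝ) (hε : 0 < ε) (u : ℝ) :
    ‖1/(ε:ℂ)^((1:ℂ)/2) * Complex.exp (-(π:ℂ)/(ε:ℂ) * (u:ℂ)^2)‖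
      = (ε ^ ((1:ℝ)/2))⁻¹ * rexp (-(π/ε) * u^2) := by
  have h1 : ((ε:ℂ))^((1:ℂ)/2) = ((ε ^ ((1:ℝ)/2) : ℝ) : ℂ) := by
    rw [Complex.ofReal_cpow hε.le]; norm_num
  have h2 : -(π:ℂ)/(ε:ℂ) * (u:ℂ)^2 = ((-(π/ε) * u^2 : ℝ) : ℂ) := by push_cast; ring
  rw [norm_mul, h1, h2, ← Complex.ofReal_exp, norm_div, norm_one, Complex.norm_real,
    Complex.norm_real, Real.norm_eq_abs, Real.norm_eq_abs,
    _root_.abs_of_nonneg (Real.rpow_nonneg hε.le _), _root_.abs_of_nonneg (Real.exp_pos _).le, one_div]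

lemma kernel_integral (ε : ℝ) (hε : 0 < ε) :
    ∫ u : ℝ, (ε ^ ((1:ℝ)/2))⁻¹ * rexp (-(π/ε) * u^2) = 1 := by
  rw [integral_const_mul, integral_gaussian]
  have : π / (π / ε) = ε := by field_simp
  rw [this, Real.sqrt_eq_rpow]
  rw [inv_mul_cancel₀ (by positivity)]

lemma kernel_integrable (ε : ℝ) (hε : 0 < ε) :
    Integrable (fun u : ℝ => (ε ^ ((1:ℝ)/2))⁻¹ * rexp (-(π/ε) * u^2)) :=
  (integrable_exp_neg_mul_sq (by positivity)).const_mul _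

set_option maxHeartbeats 2000000 in
theorem step1 (f : ℝ → ℂ) (hf : Integrable f)
    (hf2 : Integrable (fun x => ‖f x‖^2)) {ε : ℝ} (hε : 0 < ε) :
    ∫ t : ℝ, rexp (-(π*ε) * t^2) * ‖𝓕 f t‖^2 ≤ ∫ x : ℝ, ‖f x‖^2 := by
  set K := 𝓕 f with hK
  have hKc : Continuous K :=
    VectorFourier.fourierIntegral_continuous Real.continuous_fourierChar
      (by exact continuous_inner) hf
  have hvol : (volume : Measure (ℝ × ℝ)) = (volume : Measure ℝ).prod volume :=
    MeasureTheory.Measure.volume_eq_prod ℝ ℝ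
  set M := ∫ x : ℝ, ‖f x‖ with hM
  have hM0 : 0 ≤ M := integral_nonneg fun x => norm_nonneg _
  have hKb : ∀ t, ‖K t‖ ≤ M := fun t =>
    VectorFourier.norm_fourierIntegral_le_integral_norm _ _ _ _ _
  -- the triple integrand
  set Φ : ℝ → ℝ × ℝ → ℂ := fun t p =>
    (Complex.exp (((-(π*ε) * t^2 : ℝ) : ℂ)) * (Complex.exp (((-2*π*p.1*t : ℝ):ℂ) * Complex.I) * f p.1)) *
      (starRingEnd ℂ) (Complex.exp (((-2*π*p.2*t : ℝ):ℂ) * Complex.I) * f p.2) with hΦ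
  -- integrability of Φ on the product space
  have hΦm : AEStronglyMeasurable (Function.uncurry Φ)
      ((volume : Measure ℝ).prod ((volume : Measure ℝ).prod volume)) := by
    have hf1 : AEStronglyMeasurable (fun z : ℝ × (ℝ × ℝ) => f z.2.1)
        ((volume : Measure ℝ).prod ((volume : Measure ℝ).prod volume)) :=
      (hf.1.comp_fst (ν := volume)).comp_snd (μ := volume)
    have hf2' : AEStronglyMeasurable (fun z : ℝ × (ℝ × ℝ) => f z.2.2)
        ((volume : Measure ℝ).prod ((volume : Measure ℝ).prod volume)) :=
      (hf.1.comp_snd (μ := volume)).comp_snd (μ := volume)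
    apply AEStronglyMeasurable.mul
    · exact ((Complex.continuous_exp.comp (by fun_prop)).aestronglyMeasurable).mul
        (((Complex.continuous_exp.comp (by fun_prop)).aestronglyMeasurable).mul hf1)
    · exact (Complex.continuous_conj.comp_aestronglyMeasurable
        (((Complex.continuous_exp.comp (by fun_prop)).aestronglyMeasurable).mul hf2'))
  have hΦi : Integrable (Function.uncurry Φ)
      ((volume : Measure ℝ).prod ((volume : Measure ℝ).prod volume)) := by
    apply Integrable.mono'
      (g := fun z : ℝ × (ℝ × ℝ) => rexp (-(π*ε) * z.1^2) * (‖f z.2.1‖ * ‖f z.2.2‖))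
      ((integrable_exp_neg_mul_sq (by positivity)).mul_prod (hf.norm.mul_prod hf.norm))
      hΦm
    refine Filter.Eventually.of_forall fun z => ?_
    simp only [Function.uncurry, hΦ, norm_mul, RingHomIsometric.norm_map]
    rw [← Complex.ofReal_exp, Complex.norm_real]
    have e1 : ‖Complex.exp (((-2*π*z.2.1*z.1 : ℝ):ℂ) * Complex.I)‖ = 1 := by
      rw [Complex.norm_exp_ofReal_mul_I]
    have e2 : ‖Complex.exp (((-2*π*z.2.2*z.1 : ℝ):ℂ) * Complex.I)‖ = 1 := by
      rw [Complex.norm_exp_ofReal_mul_I]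
    rw [e1, e2, Real.norm_eq_abs, _root_.abs_of_nonneg (Real.exp_pos _).le]
    ring_nf
    exact le_refl _
  -- inner p-integral for fixed t
  have hKt : ∀ t : ℝ, K t = ∫ x : ℝ, Complex.exp (((-2*π*x*t : ℝ):ℂ) * Complex.I) * f x := by
    intro t
    rw [hK, Real.fourier_real_eq_integral_exp_smul]
    simp only [smul_eq_mul]
  have h1 : ∀ t : ℝ, (∫ p : ℝ × ℝ, Φ t p)
      = Complex.exp (((-(π*ε) * t^2 : ℝ):ℂ)) * (K t * (starRingEnd ℂ) (K t)) := by
    intro t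
    calc (∫ p : ℝ × ℝ, Φ t p)
        = ∫ p : ℝ × ℝ, (fun x : ℝ => Complex.exp (((-(π*ε) * t^2 : ℝ):ℂ)) *
            (Complex.exp (((-2*π*x*t : ℝ):ℂ) * Complex.I) * f x)) p.1 *
            (fun y : ℝ => (starRingEnd ℂ) (Complex.exp (((-2*π*y*t : ℝ):ℂ) * Complex.I) * f y)) p.2 := rfl
      _ = (∫ p : ℝ × ℝ, (fun x : ℝ => Complex.exp (((-(π*ε) * t^2 : ℝ):ℂ)) *
            (Complex.exp (((-2*π*x*t : ℝ):ℂ) * Complex.I) * f x)) p.1 *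
            (fun y : ℝ => (starRingEnd ℂ) (Complex.exp (((-2*π*y*t : ℝ):ℂ) * Complex.I) * f y)) p.2
            ∂((volume : Measure ℝ).prod volume)) := by rw [← hvol]
      _ = (∫ x : ℝ, Complex.exp (((-(π*ε) * t^2 : ℝ):ℂ)) *
            (Complex.exp (((-2*π*x*t : ℝ):ℂ) * Complex.I) * f x)) *
          ∫ y : ℝ, (starRingEnd ℂ) (Complex.exp (((-2*π*y*t : ℝ):ℂ) * Complex.I) * f y) :=
          integral_prod_mul (fun x : ℝ => Complex.exp (((-(π*ε) * t^2 : ℝ):ℂ)) *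
            (Complex.exp (((-2*π*x*t : ℝ):ℂ) * Complex.I) * f x))
            (fun y : ℝ => (starRingEnd ℂ) (Complex.exp (((-2*π*y*t : ℝ):ℂ) * Complex.I) * f y))
      _ = Complex.exp (((-(π*ε) * t^2 : ℝ):ℂ)) * (K t * (starRingEnd ℂ) (K t)) := by
          rw [integral_const_mul, integral_conj, ← hKt t]
          ring
  have h2 : Integrable (fun t : ℝ =>
      Complex.exp (((-(π*ε) * t^2 : ℝ):ℂ)) * (K t * (starRingEnd ℂ) (K t))) := by
    have hcont : Continuous fun t : ℝ =>
        Complex.exp (((-(π*ε) * t^2 : ℝ):ℂ)) * (K t * (starRingEnd ℂ) (K t)) := by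
      apply Continuous.mul
      · exact Complex.continuous_exp.comp (by fun_prop)
      · exact hKc.mul (Complex.continuous_conj.comp hKc)
    apply Integrable.mono' (g := fun t => M^2 * rexp (-(π*ε) * t^2))
      (((integrable_exp_neg_mul_sq (show (0:ℝ) < π*ε by positivity)).const_mul _))
      hcont.aestronglyMeasurable
    filter_upwards with t
    rw [norm_mul, ← Complex.ofReal_exp, Complex.norm_real, norm_mul, RingHomIsometric.norm_map,
      Real.norm_eq_abs, _root_.abs_of_nonneg (Real.exp_pos _).le]
    have hb := hKb t
    have hKK : ‖K t‖ * ‖K t‖ ≤ M^2 := by nlinarith [norm_nonneg (K t)]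
    have hep := (Real.exp_pos (-(π*ε) * t^2)).le
    nlinarith
  have h3 : ∫ t : ℝ, rexp (-(π*ε) * t^2) * ‖K t‖^2
      = (∫ t : ℝ, Complex.exp (((-(π*ε) * t^2 : ℝ):ℂ)) * (K t * (starRingEnd ℂ) (K t))).re := by
    have hre := integral_re (𝕜 := ℂ) h2
    simp only [RCLike.re_to_complex] at hre
    rw [← hre]
    congr 1; ext t
    rw [Complex.mul_conj, ← Complex.ofReal_exp, ← Complex.ofReal_mul, Complex.ofReal_re]
    simp [Complex.normSq_eq_norm_sq]
  set F : ℝ × ℝ → ℂ := fun p => f p.1 * (starRingEnd ℂ) (f p.2) *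
      (1/(ε:ℂ)^((1:ℂ)/2) * Complex.exp (-(π:ℂ)/(ε:ℂ) * ((p.1 - p.2 : ℝ):ℂ)^2)) with hF
  have h5 : ∀ p : ℝ × ℝ, (∫ t : ℝ, Φ t p) = F p := by
    intro p
    have hg := congrFun (fourier_gaussian_pi (b := (ε:ℂ)) (by simpa using hε)) (p.1 - p.2)
    rw [Real.fourier_real_eq_integral_exp_smul] at hg
    calc (∫ t : ℝ, Φ t p)
        = ∫ t : ℝ, (f p.1 * (starRingEnd ℂ) (f p.2)) *
            (Complex.exp (((-2*π*t*(p.1-p.2) : ℝ):ℂ) * Complex.I) •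
              Complex.exp (-(π:ℂ) * (ε:ℂ) * (t:ℂ)^2)) := by
          congr 1; ext t
          simp only [hΦ, smul_eq_mul, map_mul]
          rw [← Complex.exp_conj]
          have c1 : (starRingEnd ℂ) (((-2*π*p.2*t : ℝ):ℂ) * Complex.I)
              = ((2*π*p.2*t : ℝ):ℂ) * Complex.I := by
            rw [map_mul, Complex.conj_I, Complex.conj_ofReal]
            push_cast; ring
          rw [c1]
          rw [show ((-(π*ε) * t^2 : ℝ):ℂ) = -(π:ℂ) * (ε:ℂ) * (t:ℂ)^2 by push_cast; ring]
          have comb : Complex.exp (((-2*π*p.1*t : ℝ):ℂ) * Complex.I) *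
              Complex.exp (((2*π*p.2*t : ℝ):ℂ) * Complex.I)
              = Complex.exp (((-2*π*t*(p.1-p.2) : ℝ):ℂ) * Complex.I) := by
            rw [← Complex.exp_add]
            congr 1
            push_cast; ring
          rw [← comb]
          ring
      _ = (f p.1 * (starRingEnd ℂ) (f p.2)) *
            ∫ t : ℝ, Complex.exp (((-2*π*t*(p.1-p.2) : ℝ):ℂ) * Complex.I) •
              Complex.exp (-(π:ℂ) * (ε:ℂ) * (t:ℂ)^2) := integral_const_mul _ _
      _ = F p := by rw [hg]
  have h4 : (∫ t : ℝ, Complex.exp (((-(π*ε) * t^2 : ℝ):ℂ)) * (K t * (starRingEnd ℂ) (K t)))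
      = ∫ p : ℝ × ℝ, F p := by
    have hΦi' : Integrable (Function.uncurry Φ)
        ((volume : Measure ℝ).prod (volume : Measure (ℝ × ℝ))) := by
      rw [hvol]; exact hΦi
    simp_rw [← h1]
    rw [integral_integral_swap hΦi']
    simp_rw [h5]
  -- the kernel bound
  set k : ℝ → ℝ := fun u => (ε ^ ((1:ℝ)/2))⁻¹ * rexp (-(π/ε) * u^2) with hk
  have hknn : ∀ u, 0 ≤ k u := fun u => by
    have := (Real.exp_pos (-(π/ε) * u^2)).le
    have : (0:ℝ) ≤ (ε ^ ((1:ℝ)/2))⁻¹ := by positivity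
    positivity
  have hksymm : ∀ a b : ℝ, k (a - b) = k (b - a) := by
    intro a b
    simp only [hk]
    rw [show (a-b)^2 = (b-a)^2 by ring]
  have hB : Integrable (fun q : ℝ × ℝ => ‖f q.1‖^2 * k q.2)
      ((volume : Measure ℝ).prod volume) := by
    simp_rw [hk]
    exact hf2.mul_prod (kernel_integrable ε hε)
  have hBint : (∫ q : ℝ × ℝ, ‖f q.1‖^2 * k q.2 ∂((volume : Measure ℝ).prod volume))
      = ∫ x : ℝ, ‖f x‖^2 := by
    rw [integral_prod_mul (fun x => ‖f x‖^2) k]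
    simp only [hk]
    rw [kernel_integral ε hε, mul_one]
  have hT1 : MeasurePreserving (fun z : ℝ × ℝ => (z.1, z.2 - z.1))
      ((volume : Measure ℝ).prod volume) ((volume : Measure ℝ).prod volume) :=
    measurePreserving_prod_sub volume volume
  have hT2 : MeasurePreserving (fun z : ℝ × ℝ => (z.2, z.1 - z.2))
      ((volume : Measure ℝ).prod volume) ((volume : Measure ℝ).prod volume) :=
    measurePreserving_prod_sub_swap volume volume
  have hB1 : Integrable (fun p : ℝ × ℝ => ‖f p.1‖^2 * k (p.2 - p.1))
      ((volume : Measure ℝ).prod volume) :=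
    (hT1.integrable_comp hB.1).mpr hB
  have hB2 : Integrable (fun p : ℝ × ℝ => ‖f p.2‖^2 * k (p.1 - p.2))
      ((volume : Measure ℝ).prod volume) :=
    (hT2.integrable_comp hB.1).mpr hB
  have hB1int : (∫ p : ℝ × ℝ, ‖f p.1‖^2 * k (p.2 - p.1) ∂((volume : Measure ℝ).prod volume))
      = ∫ x : ℝ, ‖f x‖^2 := by
    rw [← hBint]
    conv_rhs => rw [← hT1.map_eq]
    rw [integral_map hT1.measurable.aemeasurable (hT1.map_eq.symm ▸ hB.1)]
  have hB2int : (∫ p : ℝ × ℝ, ‖f p.2‖^2 * k (p.1 - p.2) ∂((volume : Measure ℝ).prod volume))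
      = ∫ x : ℝ, ‖f x‖^2 := by
    rw [← hBint]
    conv_rhs => rw [← hT2.map_eq]
    rw [integral_map hT2.measurable.aemeasurable (hT2.map_eq.symm ▸ hB.1)]
  have hB1v : Integrable (fun p : ℝ × ℝ => ‖f p.1‖^2 * k (p.2 - p.1)) := by
    rw [hvol]; exact hB1
  have hB2v : Integrable (fun p : ℝ × ℝ => ‖f p.2‖^2 * k (p.1 - p.2)) := by
    rw [hvol]; exact hB2
  have hB1intv : (∫ p : ℝ × ℝ, ‖f p.1‖^2 * k (p.2 - p.1)) = ∫ x : ℝ, ‖f x‖^2 := by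
    rw [hvol]; exact hB1int
  have hB2intv : (∫ p : ℝ × ℝ, ‖f p.2‖^2 * k (p.1 - p.2)) = ∫ x : ℝ, ‖f x‖^2 := by
    rw [hvol]; exact hB2int
  have h6 : ‖∫ p : ℝ × ℝ, F p‖ ≤ ∫ x : ℝ, ‖f x‖^2 := by
    calc ‖∫ p : ℝ × ℝ, F p‖ ≤ ∫ p : ℝ × ℝ, ‖F p‖ := norm_integral_le_integral_norm _
      _ ≤ ∫ p : ℝ × ℝ, (‖f p.1‖^2 * k (p.2 - p.1) + ‖f p.2‖^2 * k (p.1 - p.2))/2 := by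
          apply integral_mono_of_nonneg
          · exact Filter.Eventually.of_forall fun p => norm_nonneg _
          · exact ((hB1v.add hB2v).div_const 2)
          · refine Filter.Eventually.of_forall fun p => ?_
            show ‖F p‖ ≤ (‖f p.1‖^2 * k (p.2 - p.1) + ‖f p.2‖^2 * k (p.1 - p.2))/2
            have hnF : ‖F p‖ = (‖f p.1‖ * ‖f p.2‖) * k (p.1 - p.2) := by
              rw [hF]
              simp only []
              rw [norm_mul, norm_mul, RingHomIsometric.norm_map, kernel_norm ε hε]
            rw [hnF, hksymm p.1 p.2]
            have h := sq_nonneg (‖f p.1‖ - ‖f p.2‖)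
            have hkp := hknn (p.2 - p.1)
            nlinarith
      _ = ∫ x : ℝ, ‖f x‖^2 := by
          rw [integral_div, integral_add hB1v hB2v, hB1intv, hB2intv]
          ring
  rw [h3, h4]
  calc (∫ p : ℝ × ℝ, F p).re ≤ ‖∫ p : ℝ × ℝ, F p‖ := Complex.re_le_norm _
    _ ≤ ∫ x : ℝ, ‖f x‖^2 := h6

theorem plancherel_le (f : ℝ → ℂ) (hf : Integrable f)
    (hf2 : Integrable (fun x => ‖f x‖^2)) :
    ∫ t : ℝ, ‖𝓕 f t‖^2 ≤ ∫ x : ℝ, ‖f x‖^2 := by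
  by_cases hK2 : Integrable (fun t : ℝ => ‖𝓕 f t‖^2)
  · have hlim : Filter.Tendsto (fun n : ℕ => ∫ t : ℝ, rexp (-(π * (1/(n+1))) * t^2) * ‖𝓕 f t‖^2)
        Filter.atTop (nhds (∫ t : ℝ, ‖𝓕 f t‖^2)) := by
      apply tendsto_integral_of_dominated_convergence (fun t => ‖𝓕 f t‖^2)
      · intro n
        exact (((Real.continuous_exp.comp (by fun_prop)).aestronglyMeasurable).mul hK2.1)
      · exact hK2
      · intro n
        refine Filter.Eventually.of_forall fun t => ?_
        rw [Real.norm_eq_abs, abs_mul, _root_.abs_of_nonneg (Real.exp_pos _).le,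
          _root_.abs_of_nonneg (sq_nonneg _)]
        have he : rexp (-(π * (1/(n+1 : ℝ))) * t^2) ≤ 1 := by
          rw [Real.exp_le_one_iff]
          have : (0:ℝ) ≤ π * (1/(n+1 : ℝ)) * t^2 := by positivity
          linarith
        nlinarith [sq_nonneg ‖𝓕 f t‖]
      · refine Filter.Eventually.of_forall fun t => ?_
        have h1 : Filter.Tendsto (fun n : ℕ => -(π * (1/(n+1))) * t^2) Filter.atTop (nhds 0) := by
          have := tendsto_one_div_add_atTop_nhds_zero_nat (𝕜 := ℝ)
          have h2 : Filter.Tendsto (fun n : ℕ => π * (1/(n+1 : ℝ))) Filter.atTop (nhds (π * 0)) :=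
            this.const_mul π
          rw [mul_zero] at h2
          have h3 := (h2.neg).mul_const (t^2)
          simpa using h3
        have := (Real.continuous_exp.continuousAt.tendsto.comp h1)
        rw [Real.exp_zero] at this
        simpa using this.mul_const (‖𝓕 f t‖^2)
    refine le_of_tendsto hlim (Filter.Eventually.of_forall fun n => ?_)
    exact step1 f hf hf2 (by positivity)
  · rw [integral_undef hK2]
    exact integral_nonneg fun x => sq_nonneg _


lemma cpow_exp_eq (x : ℝ) (z : ℂ) : ((Real.exp x : ℝ) : ℂ) ^ z = Complex.exp (z * x) := by
  rw [Complex.cpow_def_of_ne_zero (by exact_mod_cast (Real.exp_pos x).ne')]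
  rw [← Complex.ofReal_log (Real.exp_pos x).le, Real.log_exp, mul_comm]

lemma cpow_pos_eq {y : ℝ} (hy : 0 < y) (z : ℂ) :
    (y : ℂ) ^ z = Complex.exp (z * (Real.log y : ℂ)) := by
  rw [Complex.cpow_def_of_ne_zero (by exact_mod_cast hy.ne')]
  rw [← Complex.ofReal_log hy.le, mul_comm]

lemma aesm_gyh (g h : ℝ → ℝ) (hmg : Measurable g) (hmh : Measurable h) (z : ℂ) :
    AEStronglyMeasurable (fun y : ℝ => (g y : ℂ) * (y:ℂ)^z * (h y : ℂ))
      (volume.restrict (Ioi 0)) := by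
  apply AEStronglyMeasurable.congr
    (f := fun y : ℝ => (g y : ℂ) * Complex.exp (z * (Real.log y : ℂ)) * (h y : ℂ))
  · exact (((Complex.measurable_ofReal.comp hmg).mul
      (Complex.measurable_exp.comp (measurable_const.mul
        (Complex.measurable_ofReal.comp Real.measurable_log)))).mul
      (Complex.measurable_ofReal.comp hmh)).aestronglyMeasurable
  · filter_upwards [ae_restrict_mem measurableSet_Ioi] with y hy
    rw [cpow_pos_eq hy]

/-- If `Y` has density `g` on `(0,∞)` with `ess sup y^(2c-1) g(y) ≤ G < ∞`
(expressed by an a.e. bound) and `h : (0,∞) → ℝ` is measurable with `E[h(Y)²] < ∞`, then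
`∫_ℝ |E[Y^(c-1+2πit) h(Y)]|² dt ≤ G · E[h(Y)²]`. -/
theorem stmt5 (c G : ℝ) (g h : ℝ → ℝ)
    (hmg : Measurable g) (hgpos : ∀ y ∈ Ioi (0:ℝ), 0 ≤ g y)
    (hprob : (∫ y in Ioi (0:ℝ), g y) = 1)
    (hG : ∀ᵐ y ∂(volume.restrict (Ioi (0:ℝ))), y ^ (2*c - 1) * g y ≤ G)
    (hmh : Measurable h)
    (hmom : IntegrableOn (fun y => g y * h y ^ 2) (Ioi 0)) :
    (∫ t : ℝ,
        ‖∫ y in Ioi (0:ℝ),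
            (g y : ℂ) * (y : ℂ) ^ ((c : ℂ) - 1 + 2 * (Real.pi : ℂ) * (t : ℂ) * Complex.I) *
              (h y : ℂ)‖ ^ 2) ≤
      G * ∫ y in Ioi (0:ℝ), g y * h y ^ 2 := by
  -- nonnegativity facts
  have hmom0 : 0 ≤ ∫ y in Ioi (0:ℝ), g y * h y ^ 2 :=
    setIntegral_nonneg measurableSet_Ioi fun y hy => mul_nonneg (hgpos y hy) (sq_nonneg _)
  have hne : (volume.restrict (Ioi (0:ℝ))) ≠ 0 := by
    simp [Measure.restrict_eq_zero, Real.volume_Ioi]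
  haveI : (ae (volume.restrict (Ioi (0:ℝ)))).NeBot := ae_neBot.2 hne
  have hG0 : 0 ≤ G := by
    have hae : ∀ᵐ y ∂(volume.restrict (Ioi (0:ℝ))), (0:ℝ) ≤ G := by
      filter_upwards [hG, ae_restrict_mem measurableSet_Ioi] with y h1 h2
      have : 0 ≤ y ^ (2*c-1) * g y :=
        mul_nonneg (Real.rpow_nonneg (le_of_lt h2) _) (hgpos y h2)
      linarith
    obtain ⟨y, hy⟩ := hae.exists
    exact hy
  -- the exponent
  set z : ℝ → ℂ := fun t => (c : ℂ) - 1 + 2 * (π : ℂ) * (t : ℂ) * Complex.I with hz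
  have hzre : ∀ t, (z t).re = c - 1 := by intro t; simp [hz]
  -- a.e. norm of the integrand
  have hnorm : ∀ t : ℝ, ∀ y ∈ Ioi (0:ℝ),
      ‖(g y : ℂ) * (y:ℂ) ^ (z t) * (h y : ℂ)‖ = g y * y ^ (c-1) * |h y| := by
    intro t y hy
    rw [norm_mul, norm_mul, Complex.norm_real, Complex.norm_real,
      Complex.norm_cpow_eq_rpow_re_of_pos hy, hzre, Real.norm_eq_abs, Real.norm_eq_abs,
      _root_.abs_of_nonneg (hgpos y hy)]
  by_cases hI : IntegrableOn (fun y => (g y : ℂ) * (y:ℂ) ^ (z 0) * (h y : ℂ)) (Ioi 0)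
  · -- main case
    set f : ℝ → ℂ := fun x => ((g (Real.exp x) * Real.exp (c*x) * h (Real.exp x) : ℝ) : ℂ) with hf
    have hrange : Real.exp '' univ = Ioi (0:ℝ) := by rw [image_univ, Real.range_exp]
    have hderiv : ∀ x ∈ (univ : Set ℝ), HasDerivWithinAt Real.exp (Real.exp x) univ x :=
      fun x _ => (Real.hasDerivAt_exp x).hasDerivWithinAt
    have hinj : InjOn Real.exp univ := Real.exp_injective.injOn
    -- pointwise change of variables identity
    have hpt : ∀ t x : ℝ, |Real.exp x| •
        ((g (Real.exp x) : ℂ) * ((Real.exp x : ℝ):ℂ) ^ (z t) * (h (Real.exp x) : ℂ))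
        = Complex.exp ((2*π*x*t : ℝ) * Complex.I) * f x := by
      intro t x
      rw [_root_.abs_of_nonneg (Real.exp_pos x).le, Complex.real_smul, cpow_exp_eq]
      rw [show (z t) * (x:ℂ) = ((((c-1)*x : ℝ)):ℂ) + ((2*π*x*t : ℝ):ℂ) * Complex.I by
        rw [hz]; push_cast; ring]
      rw [Complex.exp_add, ← Complex.ofReal_exp]
      have hre : ((Real.exp ((c-1)*x) : ℝ) : ℂ) * ((Real.exp x : ℝ) : ℂ) = ((Real.exp (c*x) : ℝ) : ℂ) := by
        rw [← Complex.ofReal_mul, ← Real.exp_add]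
        congr 1
        ring
      simp only [hf]
      rw [show ((g (Real.exp x) * Real.exp (c*x) * h (Real.exp x) : ℝ) : ℂ)
          = ((g (Real.exp x) : ℝ) : ℂ) * ((Real.exp (c*x) : ℝ) : ℂ) * ((h (Real.exp x) : ℝ) : ℂ) by
        push_cast
        ring]
      linear_combination ((g (Real.exp x) : ℝ) : ℂ) * ((h (Real.exp x) : ℝ) : ℂ) *
        Complex.exp (((2*π*x*t : ℝ):ℂ) * Complex.I) * hre
    -- the inner integral is a Fourier transform
    have hinner : ∀ t : ℝ, (∫ y in Ioi (0:ℝ), (g y : ℂ) * (y:ℂ) ^ (z t) * (h y : ℂ))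
        = 𝓕 f (-t) := by
      intro t
      rw [← hrange, integral_image_eq_integral_abs_deriv_smul MeasurableSet.univ hderiv hinj,
        Measure.restrict_univ]
      rw [Real.fourier_real_eq_integral_exp_smul]
      congr 1
      ext x
      rw [hpt t x, smul_eq_mul]
      congr 2
      push_cast
      ring
    -- integrability of f
    have hfint : Integrable f := by
      have := (integrableOn_image_iff_integrableOn_abs_deriv_smul MeasurableSet.univ hderiv hinj
        (fun y => (g y : ℂ) * (y:ℂ) ^ (z 0) * (h y : ℂ))).mp (by rwa [hrange])
      rw [integrableOn_univ] at this
      apply this.congr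
      refine Filter.Eventually.of_forall fun x => ?_
      show |Real.exp x| • ((g (Real.exp x) : ℂ) * ((Real.exp x : ℝ):ℂ) ^ (z 0) * (h (Real.exp x) : ℂ)) = f x
      rw [hpt 0 x]
      norm_num
    -- integrability and bound for Q
    set Q : ℝ → ℝ := fun y => g y ^ 2 * y ^ (2*c-1) * h y ^ 2 with hQdef
    have hQbound : ∀ᵐ y ∂(volume.restrict (Ioi (0:ℝ))), ‖Q y‖ ≤ G * (g y * h y ^ 2) := by
      filter_upwards [hG, ae_restrict_mem measurableSet_Ioi] with y h1 h2
      have hgy := hgpos y h2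
      have hy0 : (0:ℝ) < y := h2
      have hQnn : 0 ≤ Q y := by
        simp only [hQdef]
        have := Real.rpow_nonneg hy0.le (2*c-1)
        positivity
      rw [Real.norm_eq_abs, _root_.abs_of_nonneg hQnn]
      simp only [hQdef]
      have key : g y ^ 2 * y ^ (2*c-1) * h y ^ 2 = (y ^ (2*c-1) * g y) * (g y * h y ^ 2) := by ring
      rw [key]
      exact mul_le_mul_of_nonneg_right h1 (mul_nonneg hgy (sq_nonneg _))
    have hQmeas : AEStronglyMeasurable Q (volume.restrict (Ioi (0:ℝ))) := by
      apply AEStronglyMeasurable.congr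
        (f := fun y => g y ^ 2 * Real.exp (Real.log y * (2*c-1)) * h y ^ 2)
      · exact (((hmg.pow_const 2).mul
          (Real.measurable_exp.comp (Real.measurable_log.mul measurable_const))).mul
          (hmh.pow_const 2)).aestronglyMeasurable
      · filter_upwards [ae_restrict_mem measurableSet_Ioi] with y hy
        simp only [hQdef]
        rw [Real.rpow_def_of_pos hy]
    have hQint : IntegrableOn Q (Ioi 0) := by
      apply Integrable.mono' (hmom.const_mul G) hQmeas hQbound
    -- ‖f‖² integrable and its integral
    have hfnorm : ∀ x : ℝ, |Real.exp x| • Q (Real.exp x) = ‖f x‖^2 := by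
      intro x
      rw [_root_.abs_of_nonneg (Real.exp_pos x).le, smul_eq_mul]
      simp only [hQdef, hf]
      rw [Real.rpow_def_of_pos (Real.exp_pos x), Real.log_exp]
      rw [Complex.norm_real, Real.norm_eq_abs, _root_.sq_abs]
      have e1 : Real.exp x * Real.exp (x*(2*c-1)) = Real.exp (c*x) ^ 2 := by
        rw [sq, ← Real.exp_add, ← Real.exp_add]
        congr 1
        ring
      linear_combination (g (Real.exp x)^2 * h (Real.exp x)^2) * e1
    have hf2 : Integrable (fun x => ‖f x‖^2) := by
      have := (integrableOn_image_iff_integrableOn_abs_deriv_smul MeasurableSet.univ hderiv hinj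
        Q).mp (by rwa [hrange])
      rw [integrableOn_univ] at this
      exact this.congr (Filter.Eventually.of_forall fun x => hfnorm x)
    have hval : (∫ y in Ioi (0:ℝ), Q y) = ∫ x : ℝ, ‖f x‖^2 := by
      rw [← hrange, integral_image_eq_integral_abs_deriv_smul MeasurableSet.univ hderiv hinj Q,
        Measure.restrict_univ]
      congr 1
      ext x
      exact hfnorm x
    have hQle : (∫ y in Ioi (0:ℝ), Q y) ≤ G * ∫ y in Ioi (0:ℝ), g y * h y^2 := by
      calc (∫ y in Ioi (0:ℝ), Q y) ≤ ∫ y in Ioi (0:ℝ), G * (g y * h y^2) := by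
            apply integral_mono_ae hQint (hmom.const_mul G)
            filter_upwards [hQbound] with y h1
            rw [Real.norm_eq_abs] at h1
            exact le_trans (le_abs_self _) h1
        _ = G * ∫ y in Ioi (0:ℝ), g y * h y^2 := integral_const_mul G _
    calc (∫ t : ℝ, ‖∫ y in Ioi (0:ℝ), (g y : ℂ) * (y:ℂ) ^ (z t) * (h y : ℂ)‖^2)
        = ∫ t : ℝ, ‖𝓕 f (-t)‖^2 := by
          congr 1
          ext t
          rw [hinner t]
      _ = ∫ t : ℝ, ‖𝓕 f t‖^2 := integral_neg_eq_self (fun t => ‖𝓕 f t‖^2) volume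
      _ ≤ ∫ x : ℝ, ‖f x‖^2 := plancherel_le f hfint hf2
      _ = ∫ y in Ioi (0:ℝ), Q y := hval.symm
      _ ≤ G * ∫ y in Ioi (0:ℝ), g y * h y ^ 2 := hQle
  · -- degenerate case : no integrability, all inner integrals vanish
    have hIt : ∀ t : ℝ, ¬ IntegrableOn (fun y => (g y : ℂ) * (y:ℂ) ^ (z t) * (h y : ℂ)) (Ioi 0) := by
      intro t ht
      apply hI
      apply Integrable.mono' ht.norm (aesm_gyh g h hmg hmh (z 0))
      filter_upwards [ae_restrict_mem measurableSet_Ioi] with y hy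
      rw [hnorm 0 y hy, hnorm t y hy]
    have : ∀ t : ℝ, (∫ y in Ioi (0:ℝ), (g y : ℂ) * (y:ℂ) ^ (z t) * (h y : ℂ)) = 0 :=
      fun t => integral_undef (hIt t)
    calc (∫ t : ℝ, ‖∫ y in Ioi (0:ℝ), (g y : ℂ) * (y:ℂ) ^ (z t) * (h y : ℂ)‖^2)
        = ∫ t : ℝ, (0:ℝ) := by
          congr 1; ext t; rw [this t]; simp
      _ = 0 := integral_zero _ _
      _ ≤ G * ∫ y in Ioi (0:ℝ), g y * h y ^ 2 := mul_nonneg hG0 hmom0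
end

section
/- Let Y₁,…,Yₙ be iid random variables on (0,∞) with density f_Y, c ∈ ℝ, and suppose M_c[f_U](t) ≠ 0 for all t. Define for k > 0 the statistic θ̂_k := (1/(n(n-1))) Σ_{j≠l} ∫_{-k}^k Y_j^{c-1+2πit} Y_l^{c-1-2πit} ω²(t) / |M_c[f_U](t)|² dt, where ω² is an integrable nonnegative weight making the integral well-defined. Then E[θ̂_k] = ∫_{-k}^k |M_c[f_X](t)|² ω²(t) dt, where M_c[f_X](t) = M_c[f_Y](t)/M_c[f_U](t). -/
open MeasureTheory ProbabilityTheory Set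
open scoped NNReal ENNReal

/-- Mellin transform (parameter `c`) of a real-valued function on `(0,∞)`. -/
noncomputable def mellinT (c : ℝ) (f : ℝ → ℝ) (t : ℝ) : ℂ :=
  ∫ x in Ioi (0:ℝ), (f x : ℂ) * (x : ℂ) ^ ((c : ℂ) - 1 + 2 * (Real.pi : ℂ) * (t : ℂ) * Complex.I)

private lemma re_exponent_aux (c t : ℝ) :
    ((c : ℂ) - 1 + 2 * (Real.pi : ℂ) * (t : ℂ) * Complex.I).re = c - 1 := by
  simp

private lemma re_exponent_aux' (c t : ℝ) :
    ((c : ℂ) - 1 - 2 * (Real.pi : ℂ) * (t : ℂ) * Complex.I).re = c - 1 := by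
  simp

private lemma conj_exponent_aux (c t : ℝ) :
    (starRingEnd ℂ) ((c : ℂ) - 1 + 2 * (Real.pi : ℂ) * (t : ℂ) * Complex.I) =
      (c : ℂ) - 1 - 2 * (Real.pi : ℂ) * (t : ℂ) * Complex.I := by
  simp [Complex.ext_iff]

private lemma measurable_expA (c : ℝ) :
    Measurable fun t : ℝ => (c : ℂ) - 1 + 2 * (Real.pi : ℂ) * (t : ℂ) * Complex.I :=
  measurable_const.add ((Complex.measurable_ofReal.const_mul (2 * (Real.pi : ℂ))).mul_const
    Complex.I)

private lemma measurable_expB (c : ℝ) :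
    Measurable fun t : ℝ => (c : ℂ) - 1 - 2 * (Real.pi : ℂ) * (t : ℂ) * Complex.I :=
  measurable_const.sub ((Complex.measurable_ofReal.const_mul (2 * (Real.pi : ℂ))).mul_const
    Complex.I)

/-- The spectral cut-off estimator `θ̂_k` is unbiased for
`∫_{-k}^k |M_c[f_X](t)|² ω²(t) dt` where `M_c[f_X] = M_c[f_Y]/M_c[f_U]`. -/
theorem stmt11 {Ω : Type*} [MeasureSpace Ω] [IsProbabilityMeasure (ℙ : Measure Ω)]
    (n : ℕ) (hn : 2 ≤ n) (c k : ℝ) (hk : 0 < k)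
    (fY fU : ℝ → ℝ) (w : ℝ → ℝ) (Y : Fin n → Ω → ℝ)
    (hmfY : Measurable fY) (hfYpos : ∀ y ∈ Ioi (0:ℝ), 0 ≤ fY y)
    (hprob : (∫ y in Ioi (0:ℝ), fY y) = 1)
    (hmY : ∀ j, Measurable (Y j))
    (hindep : iIndepFun Y ℙ)
    (hlaw : ∀ j, Measure.map (Y j) ℙ =
      (volume.restrict (Ioi (0:ℝ))).withDensity (fun y => ENNReal.ofReal (fY y)))
    (hMU : ∀ t : ℝ, mellinT c fU t ≠ 0)
    (hmw : Measurable w) (hwpos : ∀ t, 0 ≤ w t)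
    (hwint : IntegrableOn (fun t => w t / ‖mellinT c fU t‖ ^ 2) (Icc (-k) k))
    (hmom : IntegrableOn (fun y => fY y * y ^ (c - 1)) (Ioi 0)) :
    (∫ ω, ((1 / (n * (n - 1) : ℝ) : ℝ) : ℂ) *
        ∑ j, ∑ l, if j ≠ l then
          ∫ t in (-k)..k,
            (Y j ω : ℂ) ^ ((c : ℂ) - 1 + 2 * (Real.pi : ℂ) * (t : ℂ) * Complex.I) *
              (Y l ω : ℂ) ^ ((c : ℂ) - 1 - 2 * (Real.pi : ℂ) * (t : ℂ) * Complex.I) *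
              ((w t / ‖mellinT c fU t‖ ^ 2 : ℝ) : ℂ)
          else 0) =
      ((∫ t in (-k)..k, ‖mellinT c fY t / mellinT c fU t‖ ^ 2 * w t : ℝ) : ℂ) := by
  classical
  have hkk : (-k) ≤ k := by linarith
  have hgint : Integrable (fun t => w t / ‖mellinT c fU t‖ ^ 2)
      (volume.restrict (Ioc (-k) k)) := hwint.mono_set Ioc_subset_Icc_self
  set μ : Measure ℝ :=
    (volume.restrict (Ioi (0:ℝ))).withDensity (fun y => ENNReal.ofReal (fY y)) with hμdef
  have hμprob : IsProbabilityMeasure μ := by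
    rw [← hlaw ⟨0, by omega⟩]
    exact Measure.isProbabilityMeasure_map (hmY _).aemeasurable
  have hμpos : ∀ᵐ x ∂μ, x ∈ Ioi (0:ℝ) :=
    (ae_restrict_mem measurableSet_Ioi).filter_mono
      (withDensity_absolutelyContinuous _ _).ae_le
  have hofReal : (fun y => ENNReal.ofReal (fY y)) =
      fun y => ((Real.toNNReal (fY y) : ℝ≥0) : ℝ≥0∞) := rfl
  have hmeascpow : ∀ e : ℂ, Measurable fun x : ℝ => (x : ℂ) ^ e := fun e =>
    Complex.measurable_ofReal.pow measurable_const
  have hMel : ∀ e : ℂ, ∫ x, (x : ℂ) ^ e ∂μ = ∫ x in Ioi (0:ℝ), (fY x : ℂ) * (x : ℂ) ^ e := by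
    intro e
    rw [hμdef, hofReal, integral_withDensity_eq_integral_smul hmfY.real_toNNReal]
    refine setIntegral_congr_fun measurableSet_Ioi fun x hx => ?_
    rw [NNReal.smul_def, Real.coe_toNNReal _ (hfYpos x hx), Complex.real_smul]
  have hIntR : Integrable (fun x : ℝ => |x| ^ (c - 1)) μ := by
    rw [hμdef, hofReal, integrable_withDensity_iff_integrable_smul hmfY.real_toNNReal]
    refine Integrable.mono' hmom
      (((hmfY.real_toNNReal.coe_nnreal_real).smul
        (measurable_abs.pow measurable_const)).aestronglyMeasurable) ?_
    refine (ae_restrict_iff' measurableSet_Ioi).2 (ae_of_all _ fun x hx => ?_)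
    rw [NNReal.smul_def, norm_smul, Real.norm_eq_abs, abs_of_nonneg (NNReal.coe_nonneg _),
      Real.coe_toNNReal _ (hfYpos x hx), Real.norm_eq_abs,
      abs_of_nonneg (Real.rpow_nonneg (abs_nonneg x) _), abs_of_pos hx]
  have hμIic : μ (Iic (0:ℝ)) = 0 := by
    rw [hμdef, withDensity_apply _ measurableSet_Iic, Measure.restrict_restrict measurableSet_Iic]
    rw [Iic_inter_Ioi, Ioc_self, Measure.restrict_empty, lintegral_zero_measure]
  have hYpos : ∀ j, ∀ᵐ ω ∂(ℙ : Measure Ω), 0 < Y j ω := by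
    intro j
    rw [ae_iff]
    have hset : {ω | ¬ 0 < Y j ω} = Y j ⁻¹' (Iic 0) := by
      ext ω; simp [not_lt]
    rw [hset, ← Measure.map_apply (hmY j) measurableSet_Iic, hlaw j, hμIic]
  -- the key computation for a fixed pair (j, l), j ≠ l
  have key : ∀ j l : Fin n, j ≠ l →
      Integrable (fun ω => ∫ t in Ioc (-k) k,
          (Y j ω : ℂ) ^ ((c : ℂ) - 1 + 2 * (Real.pi : ℂ) * (t : ℂ) * Complex.I) *
            (Y l ω : ℂ) ^ ((c : ℂ) - 1 - 2 * (Real.pi : ℂ) * (t : ℂ) * Complex.I) *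
            ((w t / ‖mellinT c fU t‖ ^ 2 : ℝ) : ℂ)) ℙ ∧
      (∫ ω, ∫ t in Ioc (-k) k,
          (Y j ω : ℂ) ^ ((c : ℂ) - 1 + 2 * (Real.pi : ℂ) * (t : ℂ) * Complex.I) *
            (Y l ω : ℂ) ^ ((c : ℂ) - 1 - 2 * (Real.pi : ℂ) * (t : ℂ) * Complex.I) *
            ((w t / ‖mellinT c fU t‖ ^ 2 : ℝ) : ℂ)) =
        ((∫ t in Ioc (-k) k, ‖mellinT c fY t / mellinT c fU t‖ ^ 2 * w t : ℝ) : ℂ) := by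
    intro j l hjl
    have hFm : AEStronglyMeasurable
        (fun p : Ω × ℝ =>
          (Y j p.1 : ℂ) ^ ((c : ℂ) - 1 + 2 * (Real.pi : ℂ) * (p.2 : ℂ) * Complex.I) *
            (Y l p.1 : ℂ) ^ ((c : ℂ) - 1 - 2 * (Real.pi : ℂ) * (p.2 : ℂ) * Complex.I) *
            ((w p.2 / ‖mellinT c fU p.2‖ ^ 2 : ℝ) : ℂ))
        ((ℙ : Measure Ω).prod (volume.restrict (Ioc (-k) k))) := by
      have h1 : Measurable fun p : Ω × ℝ =>
          (Y j p.1 : ℂ) ^ ((c : ℂ) - 1 + 2 * (Real.pi : ℂ) * (p.2 : ℂ) * Complex.I) :=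
        (Complex.measurable_ofReal.comp ((hmY j).comp measurable_fst)).pow
          ((measurable_expA c).comp measurable_snd)
      have h2 : Measurable fun p : Ω × ℝ =>
          (Y l p.1 : ℂ) ^ ((c : ℂ) - 1 - 2 * (Real.pi : ℂ) * (p.2 : ℂ) * Complex.I) :=
        (Complex.measurable_ofReal.comp ((hmY l).comp measurable_fst)).pow
          ((measurable_expB c).comp measurable_snd)
      have h3 : AEStronglyMeasurable
          (fun p : Ω × ℝ => ((w p.2 / ‖mellinT c fU p.2‖ ^ 2 : ℝ) : ℂ))
          ((ℙ : Measure Ω).prod (volume.restrict (Ioc (-k) k))) :=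
        Complex.continuous_ofReal.comp_aestronglyMeasurable hgint.1.comp_snd
      exact ((h1.aestronglyMeasurable.mul h2.aestronglyMeasurable).mul h3)
    have hae : ∀ᵐ p : Ω × ℝ ∂((ℙ : Measure Ω).prod (volume.restrict (Ioc (-k) k))),
        0 < Y j p.1 ∧ 0 < Y l p.1 := by
      have h0 : (ℙ : Measure Ω) {ω | ¬ (0 < Y j ω ∧ 0 < Y l ω)} = 0 := by
        have h := (hYpos j).and (hYpos l)
        rwa [ae_iff] at h
      rw [ae_iff]
      have hsub : {p : Ω × ℝ | ¬ (0 < Y j p.1 ∧ 0 < Y l p.1)} ⊆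
          {ω | ¬ (0 < Y j ω ∧ 0 < Y l ω)} ×ˢ (univ : Set ℝ) := fun p hp =>
        Set.mem_prod.2 ⟨hp, Set.mem_univ _⟩
      refine measure_mono_null hsub ?_
      rw [Measure.prod_prod, h0, zero_mul]
    have hφ : Measurable fun x : ℝ => |x| ^ (c - 1) :=
      measurable_abs.pow measurable_const
    have hint1 : ∀ i, Integrable (fun ω => |Y i ω| ^ (c - 1)) ℙ := by
      intro i
      have h2 : Integrable (fun x : ℝ => |x| ^ (c - 1)) (Measure.map (Y i) ℙ) := by
        rw [hlaw i]; exact hIntR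
      exact (integrable_map_measure hφ.aestronglyMeasurable (hmY i).aemeasurable).mp h2
    have hbound : Integrable
        (fun p : Ω × ℝ =>
          (|Y j p.1| ^ (c - 1) * |Y l p.1| ^ (c - 1)) * ‖w p.2 / ‖mellinT c fU p.2‖ ^ 2‖)
        ((ℙ : Measure Ω).prod (volume.restrict (Ioc (-k) k))) := by
      exact Integrable.mul_prod (f := fun ω => |Y j ω| ^ (c - 1) * |Y l ω| ^ (c - 1))
        (g := fun t => ‖w t / ‖mellinT c fU t‖ ^ 2‖)
        (((hindep.indepFun hjl).comp hφ hφ).integrable_mul (hint1 j) (hint1 l)) hgint.norm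
    have hFint : Integrable
        (fun p : Ω × ℝ =>
          (Y j p.1 : ℂ) ^ ((c : ℂ) - 1 + 2 * (Real.pi : ℂ) * (p.2 : ℂ) * Complex.I) *
            (Y l p.1 : ℂ) ^ ((c : ℂ) - 1 - 2 * (Real.pi : ℂ) * (p.2 : ℂ) * Complex.I) *
            ((w p.2 / ‖mellinT c fU p.2‖ ^ 2 : ℝ) : ℂ))
        ((ℙ : Measure Ω).prod (volume.restrict (Ioc (-k) k))) := by
      refine hbound.mono' hFm ?_
      filter_upwards [hae] with p hp
      rw [norm_mul, norm_mul, Complex.norm_real,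
        Complex.norm_cpow_eq_rpow_re_of_pos hp.1, Complex.norm_cpow_eq_rpow_re_of_pos hp.2,
        re_exponent_aux, re_exponent_aux', abs_of_pos hp.1, abs_of_pos hp.2]
    have hpair : Measure.map (fun ω => (Y j ω, Y l ω)) ℙ = μ.prod μ := by
      have h := (indepFun_iff_map_prod_eq_prod_map_map (hmY j).aemeasurable
        (hmY l).aemeasurable).mp (hindep.indepFun hjl)
      rw [h, hlaw j, hlaw l]
    have hInner : ∀ t : ℝ,
        (∫ ω, (Y j ω : ℂ) ^ ((c : ℂ) - 1 + 2 * (Real.pi : ℂ) * (t : ℂ) * Complex.I) *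
            (Y l ω : ℂ) ^ ((c : ℂ) - 1 - 2 * (Real.pi : ℂ) * (t : ℂ) * Complex.I) *
            ((w t / ‖mellinT c fU t‖ ^ 2 : ℝ) : ℂ)) =
          ((‖mellinT c fY t‖ ^ 2 * (w t / ‖mellinT c fU t‖ ^ 2) : ℝ) : ℂ) := by
      intro t
      rw [MeasureTheory.integral_mul_const]
      have hMY : (∫ x : ℝ, (x : ℂ) ^ ((c : ℂ) - 1 + 2 * (Real.pi : ℂ) * (t : ℂ) * Complex.I) ∂μ)
          = mellinT c fY t := by rw [hMel]; rfl
      have hMYc : (∫ x : ℝ, (x : ℂ) ^ ((c : ℂ) - 1 - 2 * (Real.pi : ℂ) * (t : ℂ) * Complex.I) ∂μ)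
          = (starRingEnd ℂ) (mellinT c fY t) := by
        have h1 : ∀ᵐ (x : ℝ) ∂μ, (x : ℂ) ^ ((c : ℂ) - 1 - 2 * (Real.pi : ℂ) * (t : ℂ) * Complex.I)
            = (starRingEnd ℂ)
                ((x : ℂ) ^ ((c : ℂ) - 1 + 2 * (Real.pi : ℂ) * (t : ℂ) * Complex.I)) := by
          filter_upwards [hμpos] with x hx
          rw [← conj_exponent_aux c t, Complex.cpow_conj, Complex.conj_ofReal]
          rw [Complex.arg_ofReal_of_nonneg (le_of_lt hx)]
          exact Real.pi_ne_zero.symm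
        rw [integral_congr_ae h1, integral_conj, hMY]
      have hmap : (∫ ω, (Y j ω : ℂ) ^ ((c : ℂ) - 1 + 2 * (Real.pi : ℂ) * (t : ℂ) * Complex.I) *
          (Y l ω : ℂ) ^ ((c : ℂ) - 1 - 2 * (Real.pi : ℂ) * (t : ℂ) * Complex.I)) =
          ∫ p : ℝ × ℝ, (p.1 : ℂ) ^ ((c : ℂ) - 1 + 2 * (Real.pi : ℂ) * (t : ℂ) * Complex.I) *
            (p.2 : ℂ) ^ ((c : ℂ) - 1 - 2 * (Real.pi : ℂ) * (t : ℂ) * Complex.I) ∂(μ.prod μ) := by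
        rw [← hpair]
        exact (integral_map ((hmY j).prodMk (hmY l)).aemeasurable
          ((((hmeascpow _).comp measurable_fst).mul
            ((hmeascpow _).comp measurable_snd)).aestronglyMeasurable)).symm
      rw [hmap,
        integral_prod_mul (μ := μ) (ν := μ)
          (f := fun x : ℝ => (x : ℂ) ^ ((c : ℂ) - 1 + 2 * (Real.pi : ℂ) * (t : ℂ) * Complex.I))
          (g := fun x : ℝ => (x : ℂ) ^ ((c : ℂ) - 1 - 2 * (Real.pi : ℂ) * (t : ℂ) * Complex.I)),
        hMY, hMYc, Complex.mul_conj, Complex.normSq_eq_norm_sq,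
        ← Complex.ofReal_mul]
    constructor
    · exact hFint.integral_prod_left
    · rw [MeasureTheory.integral_integral_swap hFint]
      have heq : ∀ t : ℝ, (‖mellinT c fY t‖ ^ 2 * (w t / ‖mellinT c fU t‖ ^ 2) : ℝ) =
          ‖mellinT c fY t / mellinT c fU t‖ ^ 2 * w t := by
        intro t
        rw [norm_div, div_pow]
        ring
      calc (∫ t in Ioc (-k) k, ∫ ω,
              (Y j ω : ℂ) ^ ((c : ℂ) - 1 + 2 * (Real.pi : ℂ) * (t : ℂ) * Complex.I) *
              (Y l ω : ℂ) ^ ((c : ℂ) - 1 - 2 * (Real.pi : ℂ) * (t : ℂ) * Complex.I) *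
              ((w t / ‖mellinT c fU t‖ ^ 2 : ℝ) : ℂ))
          = ∫ t in Ioc (-k) k,
              ((‖mellinT c fY t‖ ^ 2 * (w t / ‖mellinT c fU t‖ ^ 2) : ℝ) : ℂ) :=
            integral_congr_ae (ae_of_all _ fun t => hInner t)
        _ = ((∫ t in Ioc (-k) k,
              ‖mellinT c fY t‖ ^ 2 * (w t / ‖mellinT c fU t‖ ^ 2) : ℝ) : ℂ) := by
            exact integral_ofReal
        _ = ((∫ t in Ioc (-k) k, ‖mellinT c fY t / mellinT c fU t‖ ^ 2 * w t : ℝ) : ℂ) :=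
            congrArg _ (integral_congr_ae (ae_of_all _ fun t => heq t))
  -- put everything together
  simp_rw [intervalIntegral.integral_of_le hkk]
  rw [MeasureTheory.integral_const_mul]
  have hintsum : ∀ j l : Fin n, Integrable (fun ω => if j ≠ l then (∫ t in Ioc (-k) k,
      (Y j ω : ℂ) ^ ((c : ℂ) - 1 + 2 * (Real.pi : ℂ) * (t : ℂ) * Complex.I) *
        (Y l ω : ℂ) ^ ((c : ℂ) - 1 - 2 * (Real.pi : ℂ) * (t : ℂ) * Complex.I) *
        ((w t / ‖mellinT c fU t‖ ^ 2 : ℝ) : ℂ)) else 0) ℙ := by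
    intro j l
    by_cases hjl : j ≠ l
    · simpa only [if_pos hjl] using (key j l hjl).1
    · simp only [if_neg hjl]
      exact integrable_zero _ _ _
  have h2 : (∫ ω, ∑ j, ∑ l, if j ≠ l then (∫ t in Ioc (-k) k,
      (Y j ω : ℂ) ^ ((c : ℂ) - 1 + 2 * (Real.pi : ℂ) * (t : ℂ) * Complex.I) *
        (Y l ω : ℂ) ^ ((c : ℂ) - 1 - 2 * (Real.pi : ℂ) * (t : ℂ) * Complex.I) *
        ((w t / ‖mellinT c fU t‖ ^ 2 : ℝ) : ℂ)) else 0) =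
      ∑ j, ∑ l, ∫ ω, if j ≠ l then (∫ t in Ioc (-k) k,
      (Y j ω : ℂ) ^ ((c : ℂ) - 1 + 2 * (Real.pi : ℂ) * (t : ℂ) * Complex.I) *
        (Y l ω : ℂ) ^ ((c : ℂ) - 1 - 2 * (Real.pi : ℂ) * (t : ℂ) * Complex.I) *
        ((w t / ‖mellinT c fU t‖ ^ 2 : ℝ) : ℂ)) else 0 := by
    rw [integral_finset_sum _ fun j _ => integrable_finset_sum _ fun l _ => hintsum j l]
    exact Finset.sum_congr rfl fun j _ => integral_finset_sum _ fun l _ => hintsum j l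
  rw [h2]
  have hval : ∀ j l : Fin n,
      (∫ ω, if j ≠ l then (∫ t in Ioc (-k) k,
          (Y j ω : ℂ) ^ ((c : ℂ) - 1 + 2 * (Real.pi : ℂ) * (t : ℂ) * Complex.I) *
            (Y l ω : ℂ) ^ ((c : ℂ) - 1 - 2 * (Real.pi : ℂ) * (t : ℂ) * Complex.I) *
            ((w t / ‖mellinT c fU t‖ ^ 2 : ℝ) : ℂ)) else 0) =
      if j ≠ l then
        ((∫ t in Ioc (-k) k, ‖mellinT c fY t / mellinT c fU t‖ ^ 2 * w t : ℝ) : ℂ) else 0 := by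
    intro j l
    by_cases hjl : j ≠ l
    · simp only [if_pos hjl]
      exact (key j l hjl).2
    · simp only [if_neg hjl, integral_zero]
  simp_rw [hval]
  have hcount : (∑ j : Fin n, ∑ l : Fin n, if j ≠ l then
      ((∫ t in Ioc (-k) k, ‖mellinT c fY t / mellinT c fU t‖ ^ 2 * w t : ℝ) : ℂ) else 0) =
      (n : ℂ) * ((n : ℂ) - 1) *
        ((∫ t in Ioc (-k) k, ‖mellinT c fY t / mellinT c fU t‖ ^ 2 * w t : ℝ) : ℂ) := by
    have h1 : ∀ j : Fin n, (∑ l : Fin n, if j ≠ l then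
        ((∫ t in Ioc (-k) k, ‖mellinT c fY t / mellinT c fU t‖ ^ 2 * w t : ℝ) : ℂ) else 0) =
        ((n : ℂ) - 1) *
          ((∫ t in Ioc (-k) k, ‖mellinT c fY t / mellinT c fU t‖ ^ 2 * w t : ℝ) : ℂ) := by
      intro j
      rw [Finset.sum_ite, Finset.sum_const, Finset.sum_const_zero, add_zero]
      have hcard : (Finset.univ.filter fun l : Fin n => j ≠ l).card = n - 1 := by
        rw [Finset.filter_ne, Finset.card_erase_of_mem (Finset.mem_univ j), Finset.card_univ,
          Fintype.card_fin]
      rw [hcard, nsmul_eq_mul, Nat.cast_sub (by omega : 1 ≤ n), Nat.cast_one]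
    simp_rw [h1]
    rw [Finset.sum_const, Finset.card_univ, Fintype.card_fin, nsmul_eq_mul]
    ring
  rw [hcount]
  have hn0 : ((n : ℂ)) ≠ 0 := Nat.cast_ne_zero.mpr (by omega)
  have hn1 : ((n : ℂ) - 1) ≠ 0 := sub_ne_zero.mpr (by
    exact_mod_cast (by omega : n ≠ 1))
  push_cast
  field_simp
end

section
/- Let A(k) := max_{k' ∈ [M]} ( |θ̂_{k∧k'} − θ̂_{k'}|² − V(k') − V(k) )₊ for a family of real numbers (θ̂_k)_{k∈[M]} and nonnegative penalties (V(k))_{k∈[M]}, and let k̂ := argmin_{k∈[M]} (A(k) + V(k)). Then for every k ∈ [M] and target θ ∈ ℝ: |θ̂_{k̂} − θ|² ≤ 4 A(k) + 4 V(k) + 2 |θ̂_k − θ|². -/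
open Finset

/-- The Goldenshluger–Lepski oracle inequality for the selected index:
for `A(k) = max_{k'∈[M]} (|θ̂_{k∧k'} − θ̂_{k'}|² − V(k') − V(k))₊` and any minimizer `k̂` of
`A(k) + V(k)` over `[M]`, one has `|θ̂_{k̂} − θ|² ≤ 4A(k) + 4V(k) + 2|θ̂_k − θ|²`. -/
theorem stmt18 (M : ℕ) (hM : 1 ≤ M) (θhat V : ℕ → ℝ)
    (hV : ∀ k ∈ Finset.Icc 1 M, 0 ≤ V k)
    (A : ℕ → ℝ)
    (hA : ∀ k, A k = (Finset.Icc 1 M).sup'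
      (Finset.nonempty_Icc.mpr hM)
      (fun k' => max (|θhat (min k k') - θhat k'| ^ 2 - V k' - V k) 0))
    (khat : ℕ) (hkhat : khat ∈ Finset.Icc 1 M)
    (hmin : ∀ k ∈ Finset.Icc 1 M, A khat + V khat ≤ A k + V k) :
    ∀ k ∈ Finset.Icc 1 M, ∀ θ : ℝ,
      |θhat khat - θ| ^ 2 ≤ 4 * A k + 4 * V k + 2 * |θhat k - θ| ^ 2 := by
  intro k hk θ
  have hAk : ∀ j ∈ Finset.Icc 1 M, ∀ j' ∈ Finset.Icc 1 M,
      |θhat (min j j') - θhat j'| ^ 2 - V j' - V j ≤ A j := by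
    intro j hj j' hj'
    rw [hA j]
    exact le_trans (le_max_left _ _) (Finset.le_sup' (fun k' => max (|θhat (min j k') - θhat k'| ^ 2 - V k' - V j) 0) hj')
  have hA0 : ∀ j ∈ Finset.Icc 1 M, 0 ≤ A j := by
    intro j hj
    rw [hA j]
    exact le_trans (le_max_right _ _) (Finset.le_sup' (fun k' => max (|θhat (min j k') - θhat k'| ^ 2 - V k' - V j) 0) hj)
  have hVk := hV k hk
  have hA0k := hA0 k hk
  have hA0khat := hA0 khat hkhat
  have hminmax := hmin k hk
  have hmid : |θhat khat - θhat k| ^ 2 ≤ 2 * A k + 2 * V k := by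
    rcases le_total khat k with h | h
    · have h1 := hAk khat hkhat k hk
      rw [min_eq_left h] at h1
      linarith
    · have h1 := hAk k hk khat hkhat
      rw [min_eq_left h, abs_sub_comm] at h1
      linarith
  have hsq : |θhat khat - θ| ^ 2 ≤
      2 * |θhat khat - θhat k| ^ 2 + 2 * |θhat k - θ| ^ 2 := by
    rw [sq_abs, sq_abs, sq_abs]
    nlinarith [sq_nonneg (θhat khat - 2 * θhat k + θ)]
  linarith
end
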